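/- Let G : ℝ≥0 × ℝ≥0 → ℝ be defined as G(ξ₁, ξ₂) = inf_{π ∈ Π} ( g_π + ξ₁ h_π + ξ₂ k_π ), where for each π ∈ Π the reals g_π, h_π, k_π are fixed. Suppose the infimum is attained at some π*(ξ₁, ξ₂) for every (ξ₁, ξ₂), and that the maps (ξ₁, ξ₂) ↦ h_{π*(ξ₁,ξ₂)} and (ξ₁, ξ₂) ↦ k_{π*(ξ₁,ξ₂)} are continuous. Then G is concave, and G is differentiable everywhere with ∂G/∂ξ₁ (ξ₁, ξ₂) = h_{π*(ξ₁,ξ₂)} and ∂G/∂ξ₂ (ξ₁, ξ₂) = k_{π*(ξ₁,ξ₂)}; in particular G is continuously differentiable. -/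

import Mathlib

open Filter Asymptotics

/-- envelope theorem, Lemma 6: if `G(ξ) = inf_π (g_π + ξ₁ h_π + ξ₂ k_π)`
is attained at `π*(ξ)` on the nonnegative quadrant and the achieved slopes
`h_{π*(·)}, k_{π*(·)}` are continuous, then `G` is concave on the quadrant and
differentiable there with gradient `(h_{π*(ξ)}, k_{π*(ξ)})`; in particular `G` is
continuously differentiable. -/
theorem stmt13 {P : Type*} [Nonempty P] (g h k : P → ℝ) (πs : ℝ × ℝ → P)
    (G : ℝ × ℝ → ℝ)
    (hinf : ∀ p ∈ {p : ℝ × ℝ | 0 ≤ p.1 ∧ 0 ≤ p.2},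
      ∀ π : P, G p ≤ g π + p.1 * h π + p.2 * k π)
    (hatt : ∀ p ∈ {p : ℝ × ℝ | 0 ≤ p.1 ∧ 0 ≤ p.2},
      G p = g (πs p) + p.1 * h (πs p) + p.2 * k (πs p))
    (hh : ContinuousOn (fun p => h (πs p)) {p : ℝ × ℝ | 0 ≤ p.1 ∧ 0 ≤ p.2})
    (hk : ContinuousOn (fun p => k (πs p)) {p : ℝ × ℝ | 0 ≤ p.1 ∧ 0 ≤ p.2}) :
    ConcaveOn ℝ {p : ℝ × ℝ | 0 ≤ p.1 ∧ 0 ≤ p.2} G ∧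
    (∀ p ∈ {p : ℝ × ℝ | 0 ≤ p.1 ∧ 0 ≤ p.2},
      HasFDerivWithinAt G
        (h (πs p) • ContinuousLinearMap.fst ℝ ℝ ℝ + k (πs p) • ContinuousLinearMap.snd ℝ ℝ ℝ)
        {p : ℝ × ℝ | 0 ≤ p.1 ∧ 0 ≤ p.2} p) ∧
    ContinuousOn (fun p => (h (πs p), k (πs p))) {p : ℝ × ℝ | 0 ≤ p.1 ∧ 0 ≤ p.2} := by
  set s : Set (ℝ × ℝ) := {p : ℝ × ℝ | 0 ≤ p.1 ∧ 0 ≤ p.2} with hsdef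
  refine ⟨⟨?_, ?_⟩, ?_, hh.prodMk hk⟩
  · -- convexity of the quadrant
    intro p hp q hq a b ha hb hab
    refine ⟨?_, ?_⟩ <;> simp only [Prod.fst_add, Prod.snd_add, Prod.smul_fst, Prod.smul_snd,
      smul_eq_mul]
    · exact add_nonneg (mul_nonneg ha hp.1) (mul_nonneg hb hq.1)
    · exact add_nonneg (mul_nonneg ha hp.2) (mul_nonneg hb hq.2)
  · -- concavity inequality
    intro p hp q hq a b ha hb hab
    have hx : a • p + b • q ∈ s := by
      refine ⟨?_, ?_⟩ <;> simp only [Prod.fst_add, Prod.snd_add, Prod.smul_fst, Prod.smul_snd,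
        smul_eq_mul]
      · exact add_nonneg (mul_nonneg ha hp.1) (mul_nonneg hb hq.1)
      · exact add_nonneg (mul_nonneg ha hp.2) (mul_nonneg hb hq.2)
    have h1 := hinf p hp (πs (a • p + b • q))
    have h2 := hinf q hq (πs (a • p + b • q))
    have hA := hatt _ hx
    simp only [Prod.fst_add, Prod.snd_add, Prod.smul_fst, Prod.smul_snd, smul_eq_mul] at hA ⊢
    rw [hA]
    have key : a * (g (πs (a • p + b • q)) + p.1 * h (πs (a • p + b • q)) + p.2 * k (πs (a • p + b • q)))
        + b * (g (πs (a • p + b • q)) + q.1 * h (πs (a • p + b • q)) + q.2 * k (πs (a • p + b • q)))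
        = g (πs (a • p + b • q)) + (a * p.1 + b * q.1) * h (πs (a • p + b • q))
          + (a * p.2 + b * q.2) * k (πs (a • p + b • q)) := by
      linear_combination (g (πs (a • p + b • q))) * hab
    linarith [mul_le_mul_of_nonneg_left h1 ha, mul_le_mul_of_nonneg_left h2 hb]
  · -- differentiability
    intro p hp
    rw [hasFDerivWithinAt_iff_isLittleO, Asymptotics.isLittleO_iff]
    intro ε hε
    have hεhalf : (0:ℝ) < ε / 2 := by positivity
    have h1 : ∀ᶠ q in nhdsWithin p s, |h (πs q) - h (πs p)| < ε / 2 := by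
      filter_upwards [Metric.tendsto_nhds.mp (hh p hp) (ε/2) hεhalf] with q hq
      simpa [Real.dist_eq] using hq
    have h2 : ∀ᶠ q in nhdsWithin p s, |k (πs q) - k (πs p)| < ε / 2 := by
      filter_upwards [Metric.tendsto_nhds.mp (hk p hp) (ε/2) hεhalf] with q hq
      simpa [Real.dist_eq] using hq
    filter_upwards [h1, h2, self_mem_nhdsWithin] with q hq1 hq2 hqs
    have hL : (h (πs p) • ContinuousLinearMap.fst ℝ ℝ ℝ
        + k (πs p) • ContinuousLinearMap.snd ℝ ℝ ℝ) (q - p)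
        = h (πs p) * (q.1 - p.1) + k (πs p) * (q.2 - p.2) := by
      simp [mul_comm]
    have hU : G q - G p ≤ h (πs p) * (q.1 - p.1) + k (πs p) * (q.2 - p.2) := by
      have := hinf q hqs (πs p)
      have := hatt p hp
      linarith
    have hLo : h (πs q) * (q.1 - p.1) + k (πs q) * (q.2 - p.2) ≤ G q - G p := by
      have := hinf p hp (πs q)
      have := hatt q hqs
      linarith
    have a1 : |q.1 - p.1| ≤ ‖q - p‖ := by
      simpa using norm_fst_le (q - p)
    have a2 : |q.2 - p.2| ≤ ‖q - p‖ := by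
      simpa using norm_snd_le (q - p)
    have e1 : |(q.1 - p.1) * (h (πs q) - h (πs p))| ≤ ‖q - p‖ * (ε / 2) := by
      rw [abs_mul]
      exact mul_le_mul a1 hq1.le (abs_nonneg _) (norm_nonneg _)
    have e2 : |(q.2 - p.2) * (k (πs q) - k (πs p))| ≤ ‖q - p‖ * (ε / 2) := by
      rw [abs_mul]
      exact mul_le_mul a2 hq2.le (abs_nonneg _) (norm_nonneg _)
    have hnn : (0:ℝ) ≤ ‖q - p‖ := norm_nonneg _
    rw [hL, Real.norm_eq_abs, abs_le]
    have b1 := abs_le.mp e1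
    have b2 := abs_le.mp e2
    constructor
    · nlinarith
    · nlinarith
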